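/- Let M ≥ 1 and let χ : (-∞,0] → (-∞,0] be an increasing, concave function with χ(0) = 0 which is differentiable on (-∞,0) and satisfies |t·χ′(t)| ≤ M·|χ(t)| for all t < 0. Then the derivative of χ satisfies the doubling estimate χ′(-2s) ≤ M·2^{M-1}·χ′(-s) for every s > 0. -/

import Mathlib

/-- Doubling estimate for the derivative of a concave weight in the class `W_M^+`:
if `χ : (-∞,0] → (-∞,0]` is increasing, concave, `χ 0 = 0`, differentiable on `(-∞,0)`
with `|t * χ' t| ≤ M * |χ t|` for `t < 0` (where `M ≥ 1`), then
`χ'(-2s) ≤ M * 2 ^ (M - 1) * χ'(-s)` for all `s > 0`. -/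
theorem doubling_estimate_of_WMplus (M : ℝ) (hM : 1 ≤ M) (χ χ' : ℝ → ℝ)
    (hmono : MonotoneOn χ (Set.Iic (0 : ℝ)))
    (hconc : ConcaveOn ℝ (Set.Iic (0 : ℝ)) χ)
    (hneg : ∀ t : ℝ, t ≤ 0 → χ t ≤ 0)
    (hχ0 : χ 0 = 0)
    (hderiv : ∀ t : ℝ, t < 0 → HasDerivAt χ (χ' t) t)
    (hsub : ∀ t : ℝ, t < 0 → |t * χ' t| ≤ M * |χ t|) :
    ∀ s : ℝ, 0 < s → χ' (-(2 * s)) ≤ M * (2 : ℝ) ^ (M - 1) * χ' (-s) := by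
  intro s hs
  -- g t = -χ(-t) for t > 0; nonnegative
  set g : ℝ → ℝ := fun t => -χ (-t) with hg
  have hgnonneg : ∀ t : ℝ, 0 < t → 0 ≤ g t := fun t ht => by
    simpa [hg] using neg_nonneg.2 (hneg (-t) (by linarith))
  -- derivative of g
  have hgderiv : ∀ t : ℝ, 0 < t → HasDerivAt g (χ' (-t)) t := by
    intro t ht
    have h1 : HasDerivAt (fun u : ℝ => χ (-u)) (χ' (-t) * (-1)) t :=
      (hderiv (-t) (by linarith)).comp t (hasDerivAt_neg t)
    have h2 := h1.neg
    rw [mul_neg, mul_one, neg_neg] at h2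
    exact h2
  -- χ'(-t) is at least the slope from -t to 0, so nonneg and ≥ g t / t
  have hslope : ∀ t : ℝ, 0 < t → g t ≤ t * χ' (-t) := by
    intro t ht
    have hs1 : slope χ (-t) 0 ≤ χ' (-t) :=
      hconc.slope_le_of_hasDerivAt (by simp [Set.mem_Iic]; linarith) (by simp)
        (by linarith) (hderiv (-t) (by linarith))
    have : slope χ (-t) 0 = g t / t := by
      simp [slope, hχ0, hg]; field_simp
    rw [this] at hs1
    calc g t = (g t / t) * t := by field_simp
    _ ≤ χ' (-t) * t := by
        exact mul_le_mul_of_nonneg_right hs1 (le_of_lt ht)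
    _ = t * χ' (-t) := mul_comm _ _
  have hχ'nonneg : ∀ t : ℝ, 0 < t → 0 ≤ χ' (-t) := by
    intro t ht
    nlinarith [hslope t ht, hgnonneg t ht]
  -- the key ODE bound: t * χ'(-t) ≤ M * g t
  have hkey : ∀ t : ℝ, 0 < t → t * χ' (-t) ≤ M * g t := by
    intro t ht
    have h1 := hsub (-t) (by linarith)
    have h2 : |(-t) * χ' (-t)| = t * χ' (-t) := by
      rw [abs_of_nonpos (by nlinarith [hχ'nonneg t ht])]; ring
    have h3 : |χ (-t)| = g t := by
      rw [abs_of_nonpos (hneg (-t) (by linarith))]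
    rwa [h2, h3] at h1
  -- h t = g t * t^(-M) is antitone on (0, ∞)
  set h : ℝ → ℝ := fun t => g t * t ^ (-M) with hh
  have hhd : ∀ t : ℝ, t ∈ Set.Ioi (0:ℝ) →
      HasDerivAt h (χ' (-t) * t ^ (-M) + g t * (-M * t ^ (-M - 1))) t := by
    intro t ht
    have ht' : (0:ℝ) < t := ht
    exact (hgderiv t ht').mul (Real.hasDerivAt_rpow_const (Or.inl ht'.ne'))
  have hanti : AntitoneOn h (Set.Ioi (0:ℝ)) := by
    apply antitoneOn_of_hasDerivWithinAt_nonpos (convex_Ioi (0:ℝ))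
      (f' := fun t => χ' (-t) * t ^ (-M) + g t * (-M * t ^ (-M - 1)))
    · intro t ht
      exact ((hhd t ht).continuousAt).continuousWithinAt
    · intro t ht
      rw [interior_Ioi] at ht
      exact (hhd t ht).hasDerivWithinAt
    · intro t ht
      rw [interior_Ioi] at ht
      have ht' : (0:ℝ) < t := ht
      have hsplit : t ^ (-M) = t * t ^ (-M - 1) := by
        rw [← Real.rpow_one_add' ht'.le (by intro hc; linarith)]
        ring_nf
      have hpow : (0:ℝ) ≤ t ^ (-M - 1) := Real.rpow_nonneg ht'.le _
      have := mul_le_mul_of_nonneg_right (hkey t ht') hpow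
      calc χ' (-t) * t ^ (-M) + g t * (-M * t ^ (-M - 1))
          = (t * χ' (-t)) * t ^ (-M - 1) - (M * g t) * t ^ (-M - 1) := by
            rw [hsplit]; ring
        _ ≤ 0 := by linarith
  -- apply antitonicity between s and 2s
  have h2s : h (2 * s) ≤ h s :=
    hanti (Set.mem_Ioi.2 hs) (Set.mem_Ioi.2 (by linarith)) (by linarith)
  have hspow : (0:ℝ) < s ^ (-M) := Real.rpow_pos_of_pos hs _
  have h2spow : (0:ℝ) < (2 * s) ^ (-M) := Real.rpow_pos_of_pos (by linarith) _
  -- g(2s) ≤ 2^M * g s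
  have hdouble : g (2 * s) ≤ (2:ℝ) ^ M * g s := by
    have hmul : (2 * s) ^ M = (2:ℝ) ^ M * s ^ M :=
      Real.mul_rpow (by norm_num) hs.le
    have hinv : (2 * s) ^ (-M) * (2 * s) ^ M = 1 := by
      rw [← Real.rpow_add (by linarith)]; simp
    have hinv2 : s ^ (-M) * s ^ M = 1 := by
      rw [← Real.rpow_add hs]; simp
    have := mul_le_mul_of_nonneg_right h2s (Real.rpow_nonneg (by linarith : (0:ℝ) ≤ 2*s) M)
    simp only [hh] at this
    calc g (2 * s) = g (2 * s) * ((2 * s) ^ (-M) * (2 * s) ^ M) := by rw [hinv]; ring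
      _ = g (2 * s) * (2 * s) ^ (-M) * (2 * s) ^ M := by ring
      _ ≤ g s * s ^ (-M) * (2 * s) ^ M := this
      _ = g s * s ^ (-M) * ((2:ℝ) ^ M * s ^ M) := by rw [hmul]
      _ = (2:ℝ) ^ M * g s * (s ^ (-M) * s ^ M) := by ring
      _ = (2:ℝ) ^ M * g s := by rw [hinv2]; ring
  -- finish
  have hfin : 2 * s * χ' (-(2 * s)) ≤ M * g (2 * s) := by
    simpa using hkey (2 * s) (by linarith)
  have hMpos : (0:ℝ) < M := by linarith
  have hgM : M * g (2 * s) ≤ M * ((2:ℝ) ^ M * (s * χ' (-s))) := by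
    have := (hdouble.trans (mul_le_mul_of_nonneg_left (hslope s hs)
      (by positivity : (0:ℝ) ≤ (2:ℝ) ^ M)))
    exact mul_le_mul_of_nonneg_left this hMpos.le
  have hexp : (2:ℝ) ^ (M - 1) = (2:ℝ) ^ M / 2 := by
    rw [Real.rpow_sub (by norm_num), Real.rpow_one]
  have h2spos : (0:ℝ) < 2 * s := by linarith
  have : 2 * s * χ' (-(2 * s)) ≤ 2 * s * (M * (2:ℝ) ^ (M - 1) * χ' (-s)) := by
    rw [hexp]
    calc 2 * s * χ' (-(2 * s)) ≤ M * ((2:ℝ) ^ M * (s * χ' (-s))) := hfin.trans hgM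
      _ = 2 * s * (M * ((2:ℝ) ^ M / 2) * χ' (-s)) := by ring
  exact le_of_mul_le_mul_left (by linarith) h2spos
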